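/- The desingularized reduced problem ŷ̇ = −cos θ, θ̇ = μ_d φ'(ŷ) on ℝ × ℝ/2πℤ has exactly four equilibria in the strip |ŷ| ≤ δ ≤ 1: (δ, π/2), (δ, 3π/2), (−δ, π/2), (−δ, 3π/2). The points (δ, 3π/2) and (−δ, π/2) are hyperbolic saddles with eigenvalues ±√(μ_d|φ''(δ)|); the points (δ, π/2) and (−δ, 3π/2) are linear centers with eigenvalues ±i√(μ_d|φ''(δ)|). -/

import Mathlib

open Real

/-- The Jacobian of the desingularized problem (ŷ̇, θ̇) = (−cos θ, μ_d φ'(ŷ))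
at a point (ŷ, θ): [[0, sin θ], [μ_d φ''(ŷ), 0]]. -/
noncomputable def Jdes (μd : ℝ) (φ : ℝ → ℝ) (yhat θ : ℝ) : Matrix (Fin 2) (Fin 2) ℝ :=
  !![0, Real.sin θ; μd * deriv (deriv φ) yhat, 0]

/-- The desingularized reduced problem ŷ̇ = −cos θ, θ̇ = μ_d φ'(ŷ) has exactly
four equilibria in the strip |ŷ| ≤ δ (θ ∈ [0,2π)): (δ,π/2), (δ,3π/2), (−δ,π/2),
(−δ,3π/2). The points (δ,3π/2) and (−δ,π/2) are hyperbolic saddles with real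
eigenvalues ±√(μ_d|φ''(δ)|); the points (δ,π/2) and (−δ,3π/2) are linear
centers with purely imaginary eigenvalues ±i√(μ_d|φ''(δ)|). -/
lemma saddle_vec (μd y θ K : ℝ) (φ : ℝ → ℝ) (hK : 0 < K)
    (hE : Real.sin θ * (μd * deriv (deriv φ) y) = K) (s : ℝ) (hs : s = 1 ∨ s = -1) :
    ∃ v : Fin 2 → ℝ, v ≠ 0 ∧ (Jdes μd φ y θ).mulVec v = (s * Real.sqrt K) • v := by
  have hsq : Real.sqrt K * Real.sqrt K = K := Real.mul_self_sqrt hK.le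
  have hsK : 0 < Real.sqrt K := Real.sqrt_pos.mpr hK
  have hs2 : s * s = 1 := by rcases hs with h | h <;> rw [h] <;> norm_num
  refine ⟨![s * Real.sqrt K, μd * deriv (deriv φ) y], ?_, ?_⟩
  · intro h
    have h0 := congrFun h 0
    simp at h0
    rcases h0 with h0 | h0
    · rcases hs with h | h <;> rw [h] at h0 <;> norm_num at h0
    · exact absurd h0 (ne_of_gt hsK)
  · funext i
    fin_cases i <;>
      simp [Jdes, Matrix.mulVec, dotProduct, Fin.sum_univ_two] <;> nlinarith [hE, hsq, hs2]

lemma center_vec (μd y θ K : ℝ) (φ : ℝ → ℝ) (hK : 0 < K)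
    (hE : Real.sin θ * (μd * deriv (deriv φ) y) = -K) (s : ℝ) (hs : s = 1 ∨ s = -1) :
    ∃ v : Fin 2 → ℂ, v ≠ 0 ∧
      ((Jdes μd φ y θ).map (Complex.ofReal)).mulVec v
        = ((s : ℂ) * Complex.I * (Real.sqrt K : ℂ)) • v := by
  have hsq : (Real.sqrt K : ℂ) * (Real.sqrt K : ℂ) = (K : ℂ) := by
    norm_cast; exact Real.mul_self_sqrt hK.le
  have hsK : (Real.sqrt K : ℂ) ≠ 0 := by
    norm_cast; exact (ne_of_gt (Real.sqrt_pos.mpr hK))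
  have hs2 : (s : ℂ) * s = 1 := by rcases hs with h | h <;> rw [h] <;> norm_num
  have hsne : (s : ℂ) ≠ 0 := by rcases hs with h | h <;> rw [h] <;> norm_num
  refine ⟨![(s : ℂ) * Complex.I * (Real.sqrt K : ℂ), ((μd * deriv (deriv φ) y : ℝ) : ℂ)], ?_, ?_⟩
  · intro h
    have h0 := congrFun h 0
    simp [hsne, hsK, Complex.I_ne_zero] at h0
  · have hEc : (Real.sin θ : ℂ) * ((μd * deriv (deriv φ) y : ℝ) : ℂ) = -(K : ℂ) := by
      rw [← Complex.ofReal_mul, hE, Complex.ofReal_neg]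
    have hEc2 : Complex.sin (θ:ℂ) * ((μd:ℂ) * ((deriv (deriv φ) y : ℝ):ℂ)) = -(K:ℂ) := by
      exact_mod_cast congrArg Complex.ofReal hE
    have hX : ((s:ℂ)*Complex.I*((Real.sqrt K:ℝ):ℂ)) * ((s:ℂ)*Complex.I*((Real.sqrt K:ℝ):ℂ)) = -(K:ℂ) := by
      rw [show ((s:ℂ)*Complex.I*((Real.sqrt K:ℝ):ℂ)) * ((s:ℂ)*Complex.I*((Real.sqrt K:ℝ):ℂ))
        = ((s:ℂ)*s)*(Complex.I*Complex.I)*(((Real.sqrt K:ℝ):ℂ)*((Real.sqrt K:ℝ):ℂ)) by ring,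
        hs2, Complex.I_mul_I, hsq]; ring
    funext i
    fin_cases i <;>
      simp [Jdes, Matrix.mulVec, dotProduct, Fin.sum_univ_two, Matrix.map_apply]
    · linear_combination hEc2 - hX
    · ring

theorem desingularized_equilibria (μd δ : ℝ) (φ : ℝ → ℝ)
    (hμd : 0 < μd) (hδ0 : 0 < δ) (hδ1 : δ < 1)
    (hC2 : ContDiff ℝ 2 φ)
    (hodd : ∀ u : ℝ, φ (-u) = -φ u)
    (hpos : ∀ u : ℝ, -δ < u → u < δ → 0 < deriv φ u)
    (hder0 : deriv φ δ = 0)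
    (hneg : ∀ u : ℝ, (δ < u ∧ u < 1) ∨ (-1 < u ∧ u < -δ) → deriv φ u < 0)
    (hφ'' : deriv (deriv φ) δ < 0) :
    ({p : ℝ × ℝ | |p.1| ≤ δ ∧ p.2 ∈ Set.Ico (0:ℝ) (2 * π) ∧
        -Real.cos p.2 = 0 ∧ μd * deriv φ p.1 = 0}
      = {(δ, π / 2), (δ, 3 * π / 2), (-δ, π / 2), (-δ, 3 * π / 2)}) ∧
    (0 < Real.sqrt (μd * |deriv (deriv φ) δ|)) ∧
    (∀ p ∈ ({(δ, 3 * π / 2), (-δ, π / 2)} : Set (ℝ × ℝ)),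
      ∀ s ∈ ({1, -1} : Set ℝ),
        ∃ v : Fin 2 → ℝ, v ≠ 0 ∧
          (Jdes μd φ p.1 p.2).mulVec v
            = (s * Real.sqrt (μd * |deriv (deriv φ) δ|)) • v) ∧
    (∀ p ∈ ({(δ, π / 2), (-δ, 3 * π / 2)} : Set (ℝ × ℝ)),
      ∀ s ∈ ({1, -1} : Set ℝ),
        ∃ v : Fin 2 → ℂ, v ≠ 0 ∧
          ((Jdes μd φ p.1 p.2).map (Complex.ofReal)).mulVec v
            = ((s : ℂ) * Complex.I * (Real.sqrt (μd * |deriv (deriv φ) δ|) : ℂ)) • v) := by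
  have hπ := Real.pi_pos
  have heven : ∀ x : ℝ, deriv φ (-x) = deriv φ x := by
    intro x
    have h1 : (fun u : ℝ => φ (-u)) = fun u => -φ u := funext hodd
    have h2 := deriv_comp_neg φ x
    rw [h1, deriv.fun_neg] at h2
    linarith
  have hodd2 : ∀ x : ℝ, deriv (deriv φ) (-x) = -deriv (deriv φ) x := by
    intro x
    have h1 : (fun u : ℝ => deriv φ (-u)) = deriv φ := funext heven
    have h2 := deriv_comp_neg (deriv φ) x
    rw [h1] at h2
    linarith
  have hderneg : deriv φ (-δ) = 0 := by rw [heven]; exact hder0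
  have h2neg : deriv (deriv φ) (-δ) = -deriv (deriv φ) δ := hodd2 δ
  set K := μd * |deriv (deriv φ) δ| with hK
  have hKpos : 0 < K := mul_pos hμd (abs_pos.mpr (ne_of_lt hφ''))
  have hsqK : 0 < Real.sqrt K := Real.sqrt_pos.mpr hKpos
  have habs : |deriv (deriv φ) δ| = -deriv (deriv φ) δ := abs_of_neg hφ''
  have hsin32 : Real.sin (3 * π / 2) = -1 := by
    rw [show (3 * π / 2) = π + π / 2 by ring, Real.sin_add]; simp
  have hsin12 : Real.sin (π / 2) = 1 := Real.sin_pi_div_two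
  have hcos32 : Real.cos (3 * π / 2) = 0 := by
    rw [show (3 * π / 2) = π + π / 2 by ring, Real.cos_add]; simp
  refine ⟨?_, hsqK, ?_, ?_⟩
  · ext ⟨y, θ⟩
    simp only [Set.mem_setOf_eq, Set.mem_insert_iff, Set.mem_singleton_iff, Prod.mk.injEq,
      Set.mem_Ico]
    constructor
    · rintro ⟨hy, ⟨hθ0, hθ2⟩, hcos, hder⟩
      have hcos' : Real.cos θ = 0 := by linarith
      have hdφ : deriv φ y = 0 := by
        rcases mul_eq_zero.mp hder with h | h
        · exact absurd h (ne_of_gt hμd)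
        · exact h
      have hy' : y = δ ∨ y = -δ := by
        rcases abs_le.mp hy with ⟨hy1, hy2⟩
        rcases eq_or_lt_of_le hy2 with h | h
        · exact Or.inl h
        rcases eq_or_lt_of_le hy1 with h' | h'
        · exact Or.inr h'.symm
        · exact absurd hdφ (ne_of_gt (hpos y h' h))
      have hθ' : θ = π / 2 ∨ θ = 3 * π / 2 := by
        obtain ⟨k, hk⟩ := Real.cos_eq_zero_iff.mp hcos'
        rw [hk] at hθ0 hθ2
        have h1 : (0:ℝ) ≤ 2 * (k:ℝ) + 1 := by nlinarith
        have h2 : 2 * (k:ℝ) + 1 < 4 := by nlinarith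
        have h1' : (0:ℤ) ≤ 2 * k + 1 := by exact_mod_cast h1
        have h2' : (2 * k + 1 : ℤ) < 4 := by exact_mod_cast h2
        have hkk : k = 0 ∨ k = 1 := by omega
        rcases hkk with h | h <;> subst h <;> [left; right] <;> (rw [hk]; push_cast; ring)
      rcases hy' with hy' | hy' <;> rcases hθ' with hθ' | hθ' <;> subst hy' <;> subst hθ' <;> tauto
    · have habs1 : |δ| ≤ δ := le_of_eq (abs_of_pos hδ0)
      have habs2 : |-δ| ≤ δ := by rw [abs_neg]; exact habs1
      have hb1 : (0:ℝ) ≤ π / 2 := by positivity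
      have hb2 : π / 2 < 2 * π := by nlinarith
      have hb3 : (0:ℝ) ≤ 3 * π / 2 := by positivity
      have hb4 : 3 * π / 2 < 2 * π := by nlinarith
      rintro (⟨h1, h2⟩ | ⟨h1, h2⟩ | ⟨h1, h2⟩ | ⟨h1, h2⟩) <;> subst h1 <;> subst h2
      · exact ⟨habs1, ⟨hb1, hb2⟩, by simp, by simp [hder0]⟩
      · exact ⟨habs1, ⟨hb3, hb4⟩, by simp [hcos32], by simp [hder0]⟩
      · exact ⟨habs2, ⟨hb1, hb2⟩, by simp, by simp [hderneg]⟩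
      · exact ⟨habs2, ⟨hb3, hb4⟩, by simp [hcos32], by simp [hderneg]⟩
  · rintro p hp s hs
    simp only [Set.mem_insert_iff, Set.mem_singleton_iff] at hp hs
    rcases hp with hp | hp <;> subst hp
    · exact saddle_vec μd δ (3 * π / 2) K φ hKpos
        (by rw [hsin32, hK, habs]; ring) s hs
    · exact saddle_vec μd (-δ) (π / 2) K φ hKpos
        (by rw [hsin12, h2neg, hK, habs]; ring) s hs
  · rintro p hp s hs
    simp only [Set.mem_insert_iff, Set.mem_singleton_iff] at hp hs
    rcases hp with hp | hp <;> subst hp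
    · exact center_vec μd δ (π / 2) K φ hKpos
        (by rw [hsin12, hK, habs]; ring) s hs
    · exact center_vec μd (-δ) (3 * π / 2) K φ hKpos
        (by rw [hsin32, h2neg, hK, habs]; ring) s hs
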